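/- Let c_1, c_2 > 0 and Z = [0,c_1] × [0,c_2]. The maximizers of g_3(x,y,z) = |det C(x,y,z)| over (x,y,z) ∈ Z³ are exactly the triples consisting of two adjacent vertices of the rectangle Z together with an arbitrary point on the edge of Z opposite to the edge joining those two vertices; the maximum value is c_1 c_2. -/
import Mathlib

open Matrix

/-- The 3×3 matrix with columns `(1,x₁,x₂)ᵀ, (1,y₁,y₂)ᵀ, (1,z₁,z₂)ᵀ`. -/
noncomputable def matC (x y z : ℝ × ℝ) : Matrix (Fin 3) (Fin 3) ℝ :=
  !![1, 1, 1; x.1, y.1, z.1; x.2, y.2, z.2]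

lemma detC_eq (x y z : ℝ × ℝ) :
    (matC x y z).det = (y.1-x.1)*(z.2-x.2) - (z.1-x.1)*(y.2-x.2) := by
  simp [matC, Matrix.det_fin_three]; ring

section MS
variable {α : Type*}

lemma mswap12 (a b c : α) : ({a,b,c} : Multiset α) = {b,a,c} := by
  simp only [Multiset.insert_eq_cons]
  exact Multiset.cons_swap a b _

lemma mswap23 (a b c : α) : ({a,b,c} : Multiset α) = {a,c,b} := by
  simp only [Multiset.insert_eq_cons]
  exact congrArg (a ::ₘ ·) (Multiset.cons_swap b c 0)

lemma mrot (a b c : α) : ({a,b,c} : Multiset α) = {c,a,b} :=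
  (mswap23 a b c).trans (mswap12 a c b)

lemma triple_eq {x y z a b c : α} (h : ({x,y,z} : Multiset α) = {a,b,c}) :
    (x=a∧y=b∧z=c) ∨ (x=a∧y=c∧z=b) ∨ (x=b∧y=a∧z=c) ∨ (x=b∧y=c∧z=a)
      ∨ (x=c∧y=a∧z=b) ∨ (x=c∧y=b∧z=a) := by
  classical
  simp only [Multiset.insert_eq_cons, Multiset.cons_eq_cons,
    Multiset.singleton_eq_cons_iff] at h
  aesop

end MS

/-- The set of maximizing configurations. -/
def isMaxConf (c₁ c₂ : ℝ) (s : Multiset (ℝ × ℝ)) : Prop :=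
  (∃ α ∈ Set.Icc (0 : ℝ) c₁, s = {((0 : ℝ), (0 : ℝ)), (c₁, 0), (α, c₂)})
  ∨ (∃ β ∈ Set.Icc (0 : ℝ) c₂, s = {((0 : ℝ), (0 : ℝ)), (c₁, β), (0, c₂)})
  ∨ (∃ β ∈ Set.Icc (0 : ℝ) c₂, s = {((0 : ℝ), β), (c₁, 0), (c₁, c₂)})
  ∨ (∃ α ∈ Set.Icc (0 : ℝ) c₁, s = {(α, (0 : ℝ)), (0, c₂), (c₁, c₂)})

lemma main_aux (c₁ c₂ : ℝ) (hc₁ : 0 < c₁) (hc₂ : 0 < c₂) (x y z : ℝ × ℝ)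
    (hx : x ∈ Set.Icc 0 c₁ ×ˢ Set.Icc 0 c₂) (hy : y ∈ Set.Icc 0 c₁ ×ˢ Set.Icc 0 c₂)
    (hz : z ∈ Set.Icc 0 c₁ ×ˢ Set.Icc 0 c₂)
    (h1 : x.2 ≤ y.2) (h2 : x.2 ≤ z.2) :
    (y.1-x.1)*(z.2-x.2) - (z.1-x.1)*(y.2-x.2) ≤ c₁*c₂ ∧
    ((y.1-x.1)*(z.2-x.2) - (z.1-x.1)*(y.2-x.2) = c₁*c₂ → isMaxConf c₁ c₂ {x, y, z}) := by
  obtain ⟨x1, x2⟩ := x; obtain ⟨y1, y2⟩ := y; obtain ⟨z1, z2⟩ := z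
  simp only [Set.mem_prod, Set.mem_Icc] at hx hy hz
  obtain ⟨⟨hx1, hx1'⟩, hx2, hx2'⟩ := hx
  obtain ⟨⟨hy1, hy1'⟩, hy2, hy2'⟩ := hy
  obtain ⟨⟨hz1, hz1'⟩, hz2, hz2'⟩ := hz
  dsimp only at h1 h2 ⊢
  rcases le_or_gt 0 (y1 - x1) with hA | hA
  · rcases le_or_gt 0 (z1 - x1) with hB | hB
    · -- A ≥ 0, B ≥ 0 : D ≤ A t ≤ c₁ t ≤ c₁ c₂
      have hsum : (z1-x1)*(y2-x2) + (c₁-(y1-x1))*(z2-x2) + c₁*(c₂-(z2-x2))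
          = c₁*c₂ - ((y1-x1)*(z2-x2) - (z1-x1)*(y2-x2)) := by ring
      have n1 : 0 ≤ (z1-x1)*(y2-x2) := mul_nonneg hB (by linarith)
      have n2 : 0 ≤ (c₁-(y1-x1))*(z2-x2) := mul_nonneg (by linarith) (by linarith)
      have n3 : 0 ≤ c₁*(c₂-(z2-x2)) := mul_nonneg hc₁.le (by linarith)
      refine ⟨by linarith, fun hd => ?_⟩
      have z1' : (z1-x1)*(y2-x2) = 0 := by linarith
      have z3' : c₁*(c₂-(z2-x2)) = 0 := by linarith
      have z2' : (c₁-(y1-x1))*(z2-x2) = 0 := by linarith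
      have ht : z2 - x2 = c₂ := by
        rcases mul_eq_zero.1 z3' with h | h
        · exact absurd h hc₁.ne'
        · linarith
      have ex2 : x2 = 0 := by linarith
      have ez2 : z2 = c₂ := by linarith
      have hAc : y1 - x1 = c₁ := by
        rcases mul_eq_zero.1 z2' with h | h
        · linarith
        · exfalso; rw [ht] at h; exact hc₂.ne' h
      have ex1 : x1 = 0 := by linarith
      have ey1 : y1 = c₁ := by linarith
      rcases mul_eq_zero.1 z1' with h | h
      · -- z1 = 0 : case B with β = y2
        have ez1 : z1 = 0 := by linarith
        refine Or.inr (Or.inl ⟨y2, ⟨by linarith, by linarith⟩, ?_⟩)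
        rw [show (x1,x2) = ((0:ℝ),(0:ℝ)) by rw [ex1, ex2],
          show (y1,y2) = (c₁,y2) by rw [ey1],
          show (z1,z2) = ((0:ℝ),c₂) by rw [ez1, ez2]]
      · -- y2 = 0 : case A with α = z1
        have ey2 : y2 = 0 := by linarith
        refine Or.inl ⟨z1, ⟨hz1, hz1'⟩, ?_⟩
        rw [show (x1,x2) = ((0:ℝ),(0:ℝ)) by rw [ex1, ex2],
          show (y1,y2) = (c₁,(0:ℝ)) by rw [ey1, ey2],
          show (z1,z2) = (z1,c₂) by rw [ez2]]
    · -- A ≥ 0, B < 0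
      have hsum : (y1-x1)*(c₂-(z2-x2)) + (x1-z1)*(c₂-(y2-x2)) + (c₁-(y1-z1))*c₂
          = c₁*c₂ - ((y1-x1)*(z2-x2) - (z1-x1)*(y2-x2)) := by ring
      have n1 : 0 ≤ (y1-x1)*(c₂-(z2-x2)) := mul_nonneg hA (by linarith)
      have n2 : 0 ≤ (x1-z1)*(c₂-(y2-x2)) := mul_nonneg (by linarith) (by linarith)
      have n3 : 0 ≤ (c₁-(y1-z1))*c₂ := mul_nonneg (by linarith) hc₂.le
      refine ⟨by linarith, fun hd => ?_⟩
      have z1' : (y1-x1)*(c₂-(z2-x2)) = 0 := by linarith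
      have z2' : (x1-z1)*(c₂-(y2-x2)) = 0 := by linarith
      have z3' : (c₁-(y1-z1))*c₂ = 0 := by linarith
      have hy1z1 : y1 - z1 = c₁ := by
        rcases mul_eq_zero.1 z3' with h | h
        · linarith
        · exact absurd h hc₂.ne'
      have ey1 : y1 = c₁ := by linarith
      have ez1 : z1 = 0 := by linarith
      have hs : y2 - x2 = c₂ := by
        rcases mul_eq_zero.1 z2' with h | h
        · exfalso; rw [ez1] at h; linarith
        · linarith
      have ex2 : x2 = 0 := by linarith
      have ey2 : y2 = c₂ := by linarith
      rcases mul_eq_zero.1 z1' with h | h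
      · -- x1 = c₁ : case C with β = z2
        have ex1e : x1 = c₁ := by linarith
        refine Or.inr (Or.inr (Or.inl ⟨z2, ⟨hz2, hz2'⟩, ?_⟩))
        rw [show (x1,x2) = (c₁,(0:ℝ)) by rw [ex1e, ex2],
          show (y1,y2) = (c₁,c₂) by rw [ey1, ey2],
          show (z1,z2) = ((0:ℝ),z2) by rw [ez1]]
        exact mrot _ _ _
      · -- z2 = c₂ : case D with α = x1
        have ez2 : z2 = c₂ := by linarith
        refine Or.inr (Or.inr (Or.inr ⟨x1, ⟨hx1, hx1'⟩, ?_⟩))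
        rw [show (x1,x2) = (x1,(0:ℝ)) by rw [ex2],
          show (y1,y2) = (c₁,c₂) by rw [ey1, ey2],
          show (z1,z2) = ((0:ℝ),c₂) by rw [ez1, ez2]]
        exact mswap23 _ _ _
  · rcases le_or_gt 0 (z1 - x1) with hB | hB
    · -- A < 0, B ≥ 0 : D ≤ 0
      have n1 : (y1-x1)*(z2-x2) ≤ 0 := mul_nonpos_of_nonpos_of_nonneg hA.le (by linarith)
      have n2 : 0 ≤ (z1-x1)*(y2-x2) := mul_nonneg hB (by linarith)
      constructor
      · nlinarith
      · intro hd; exfalso; nlinarith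
    · -- A < 0, B < 0
      have hsum : (x1-y1)*(z2-x2) + (c₁+(z1-x1))*(y2-x2) + c₁*(c₂-(y2-x2))
          = c₁*c₂ - ((y1-x1)*(z2-x2) - (z1-x1)*(y2-x2)) := by ring
      have n1 : 0 ≤ (x1-y1)*(z2-x2) := mul_nonneg (by linarith) (by linarith)
      have n2 : 0 ≤ (c₁+(z1-x1))*(y2-x2) := mul_nonneg (by linarith) (by linarith)
      have n3 : 0 ≤ c₁*(c₂-(y2-x2)) := mul_nonneg hc₁.le (by linarith)
      refine ⟨by linarith, fun hd => ?_⟩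
      have z1' : (x1-y1)*(z2-x2) = 0 := by linarith
      have z2' : (c₁+(z1-x1))*(y2-x2) = 0 := by linarith
      have z3' : c₁*(c₂-(y2-x2)) = 0 := by linarith
      have hs : y2 - x2 = c₂ := by
        rcases mul_eq_zero.1 z3' with h | h
        · exact absurd h hc₁.ne'
        · linarith
      have ex2 : x2 = 0 := by linarith
      have ey2 : y2 = c₂ := by linarith
      have hBc : z1 - x1 = -c₁ := by
        rcases mul_eq_zero.1 z2' with h | h
        · linarith
        · exfalso; rw [hs] at h; exact hc₂.ne' h
      have ex1 : x1 = c₁ := by linarith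
      have ez1 : z1 = 0 := by linarith
      have ez2 : z2 = 0 := by
        rcases mul_eq_zero.1 z1' with h | h
        · exfalso; linarith
        · linarith
      refine Or.inl ⟨y1, ⟨hy1, hy1'⟩, ?_⟩
      rw [show (x1,x2) = (c₁,(0:ℝ)) by rw [ex1, ex2],
        show (y1,y2) = (y1,c₂) by rw [ey2],
        show (z1,z2) = ((0:ℝ),(0:ℝ)) by rw [ez1, ez2]]
      exact mrot _ _ _
/-- On the rectangle `Z = [0,c₁] × [0,c₂]`, the maximum of
`g₃(x,y,z) = |det C(x,y,z)|` over `Z³` is `c₁ c₂`, attained exactly at the triples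
consisting of two adjacent vertices of the rectangle together with an arbitrary point on
the opposite edge. -/
theorem stmt14 (c₁ c₂ : ℝ) (hc₁ : 0 < c₁) (hc₂ : 0 < c₂)
    (x y z : ℝ × ℝ)
    (hx : x ∈ Set.Icc 0 c₁ ×ˢ Set.Icc 0 c₂) (hy : y ∈ Set.Icc 0 c₁ ×ˢ Set.Icc 0 c₂)
    (hz : z ∈ Set.Icc 0 c₁ ×ˢ Set.Icc 0 c₂) :
    |(matC x y z).det| ≤ c₁ * c₂
    ∧ (|(matC x y z).det| = c₁ * c₂ ↔
        (∃ α ∈ Set.Icc (0 : ℝ) c₁,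
          ({x, y, z} : Multiset (ℝ × ℝ)) = {((0 : ℝ), (0 : ℝ)), (c₁, 0), (α, c₂)})
        ∨ (∃ β ∈ Set.Icc (0 : ℝ) c₂,
          ({x, y, z} : Multiset (ℝ × ℝ)) = {((0 : ℝ), (0 : ℝ)), (c₁, β), (0, c₂)})
        ∨ (∃ β ∈ Set.Icc (0 : ℝ) c₂,
          ({x, y, z} : Multiset (ℝ × ℝ)) = {((0 : ℝ), β), (c₁, 0), (c₁, c₂)})
        ∨ (∃ α ∈ Set.Icc (0 : ℝ) c₁,
          ({x, y, z} : Multiset (ℝ × ℝ)) = {(α, (0 : ℝ)), (0, c₂), (c₁, c₂)})) := by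
  rw [detC_eq]
  have both :
      ((y.1-x.1)*(z.2-x.2) - (z.1-x.1)*(y.2-x.2) ≤ c₁*c₂ ∧
        ((y.1-x.1)*(z.2-x.2) - (z.1-x.1)*(y.2-x.2) = c₁*c₂ → isMaxConf c₁ c₂ {x,y,z})) ∧
      (-((y.1-x.1)*(z.2-x.2) - (z.1-x.1)*(y.2-x.2)) ≤ c₁*c₂ ∧
        (-((y.1-x.1)*(z.2-x.2) - (z.1-x.1)*(y.2-x.2)) = c₁*c₂ → isMaxConf c₁ c₂ {x,y,z})) := by
    rcases le_total x.2 y.2 with hxy | hxy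
    · rcases le_total x.2 z.2 with hxz | hxz
      · -- x has minimal second coordinate
        have m1 := main_aux c₁ c₂ hc₁ hc₂ x y z hx hy hz hxy hxz
        have m2 := main_aux c₁ c₂ hc₁ hc₂ x z y hx hz hy hxz hxy
        rw [show (z.1-x.1)*(y.2-x.2) - (y.1-x.1)*(z.2-x.2)
            = -((y.1-x.1)*(z.2-x.2) - (z.1-x.1)*(y.2-x.2)) by ring,
          mswap23 x z y] at m2
        exact ⟨m1, m2⟩
      · -- z minimal
        have hzy : z.2 ≤ y.2 := le_trans hxz hxy
        have m1 := main_aux c₁ c₂ hc₁ hc₂ z x y hz hx hy hxz hzy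
        have m2 := main_aux c₁ c₂ hc₁ hc₂ z y x hz hy hx hzy hxz
        rw [show (x.1-z.1)*(y.2-z.2) - (y.1-z.1)*(x.2-z.2)
            = (y.1-x.1)*(z.2-x.2) - (z.1-x.1)*(y.2-x.2) by ring,
          (mrot x y z).symm] at m1
        rw [show (y.1-z.1)*(x.2-z.2) - (x.1-z.1)*(y.2-z.2)
            = -((y.1-x.1)*(z.2-x.2) - (z.1-x.1)*(y.2-x.2)) by ring,
          (mswap23 z y x).trans (mrot x y z).symm] at m2
        exact ⟨m1, m2⟩
    · rcases le_total y.2 z.2 with hyz | hyz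
      · -- y minimal
        have m1 := main_aux c₁ c₂ hc₁ hc₂ y z x hy hz hx hyz hxy
        have m2 := main_aux c₁ c₂ hc₁ hc₂ y x z hy hx hz hxy hyz
        rw [show (z.1-y.1)*(x.2-y.2) - (x.1-y.1)*(z.2-y.2)
            = (y.1-x.1)*(z.2-x.2) - (z.1-x.1)*(y.2-x.2) by ring,
          mrot y z x] at m1
        rw [show (x.1-y.1)*(z.2-y.2) - (z.1-y.1)*(x.2-y.2)
            = -((y.1-x.1)*(z.2-x.2) - (z.1-x.1)*(y.2-x.2)) by ring,
          mswap12 y x z] at m2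
        exact ⟨m1, m2⟩
      · -- z minimal
        have hzx : z.2 ≤ x.2 := le_trans hyz hxy
        have m1 := main_aux c₁ c₂ hc₁ hc₂ z x y hz hx hy hzx hyz
        have m2 := main_aux c₁ c₂ hc₁ hc₂ z y x hz hy hx hyz hzx
        rw [show (x.1-z.1)*(y.2-z.2) - (y.1-z.1)*(x.2-z.2)
            = (y.1-x.1)*(z.2-x.2) - (z.1-x.1)*(y.2-x.2) by ring,
          (mrot x y z).symm] at m1
        rw [show (y.1-z.1)*(x.2-z.2) - (x.1-z.1)*(y.2-z.2)
            = -((y.1-x.1)*(z.2-x.2) - (z.1-x.1)*(y.2-x.2)) by ring,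
          (mswap23 z y x).trans (mrot x y z).symm] at m2
        exact ⟨m1, m2⟩
  refine ⟨abs_le.2 ⟨by linarith [both.2.1], both.1.1⟩, fun h => ?_, fun hconf => ?_⟩
  · rcases (abs_eq (mul_pos hc₁ hc₂).le).1 h with h | h
    · exact both.1.2 h
    · exact both.2.2 (by linarith)
  · rcases hconf with ⟨α, hα, hms⟩ | ⟨β, hβ, hms⟩ | ⟨β, hβ, hms⟩ | ⟨α, hα, hms⟩ <;>
      rcases triple_eq hms with
        ⟨h1,h2,h3⟩|⟨h1,h2,h3⟩|⟨h1,h2,h3⟩|⟨h1,h2,h3⟩|⟨h1,h2,h3⟩|⟨h1,h2,h3⟩ <;>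
      subst h1 <;> subst h2 <;> subst h3 <;>
      rw [abs_eq (mul_pos hc₁ hc₂).le] <;> dsimp only <;>
      first | (left; ring1) | (right; ring1)
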